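/- arXiv:2604.02628 — 2 statements merged into one kernel-verified Lean document; each statement's English description precedes it below -/
import Mathlib

section
/- Let F be a homogeneous polynomial of degree 3 over ℂ in x_0, x_1, x_2, x_3 such that the binary cubic G(y,z) := F(0,0,y,z) is not of the form c·ℓ(y,z)^3 for any scalar c ∈ ℂ and linear form ℓ. Let t ∈ ℂ and f := x_4^3 − F(x_0,x_1,x_2,x_3) + x_5·(x_0·x_3 − x_1·x_2) + t·x_0·x_5^2. If W ⊆ ℂ^6 is a 2-dimensional linear subspace on which f vanishes identically and W contains two linearly independent vectors w_1, w_2, each of the form w_j = μ_j·e_5 + u_j with (u_j)_0 = (u_j)_1 = (u_j)_5 = 0 and (u_j)_4^3 = F((u_j)_0,(u_j)_1,(u_j)_2,(u_j)_3), then e_5 ∈ W. (A line on Y_{F,t} meeting the cone Ĉ_1 at more than one point must pass through the vertex p_0.) -/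
open MvPolynomial

/-- The cubic form `f = x₄³ − F(x₀,x₁,x₂,x₃) + x₅(x₀x₃ − x₁x₂) + t·x₀x₅²` defining the
cyclic cubic fourfold `Y_{F,t} ⊂ ℙ⁵`. -/
noncomputable def fPoly (F : MvPolynomial (Fin 4) ℂ) (t : ℂ) : MvPolynomial (Fin 6) ℂ :=
  X 4 ^ 3 - rename (Fin.castLE (by norm_num)) F
    + X 5 * (X 0 * X 3 - X 1 * X 2) + C t * X 0 * X 5 ^ 2

/-- The vector `e₅ = (0,0,0,0,0,1)`, representing the point `p₀ = [0:0:0:0:0:1]`. -/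
def e5 : Fin 6 → ℂ := ![0, 0, 0, 0, 0, 1]

lemma eval_fPoly (F : MvPolynomial (Fin 4) ℂ) (t : ℂ) (v : Fin 6 → ℂ)
    (h0 : v 0 = 0) (h1 : v 1 = 0) :
    eval v (fPoly F t) = v 4 ^ 3 - eval ![0, 0, v 2, v 3] F := by
  have hc : (v ∘ Fin.castLE (show (4:ℕ) ≤ 6 by norm_num)) = ![0, 0, v 2, v 3] := by
    funext i
    fin_cases i <;> simp [Fin.castLE, h0, h1] <;> rfl
  simp only [fPoly, map_add, map_sub, map_mul, map_pow, eval_X, eval_C, eval_rename, hc,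
    h0, h1]
  ring

/-- If the binary cubic `G(y,z) = F(0,0,y,z)` is not proportional to the cube of a
linear form, then a line on `Y_{F,t}` meeting the cone `Ĉ₁` at more than one point
must pass through the vertex `p₀`. -/
theorem stmt6 (F : MvPolynomial (Fin 4) ℂ) (hF : F.IsHomogeneous 3)
    (hG : ¬ ∃ c a b : ℂ, ∀ y z : ℂ, eval ![0, 0, y, z] F = c * (a * y + b * z) ^ 3)
    (t : ℂ) (W : Submodule ℂ (Fin 6 → ℂ)) (hWdim : Module.finrank ℂ ↥W = 2)
    (hWf : ∀ v ∈ W, eval v (fPoly F t) = 0)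
    (w1 w2 : Fin 6 → ℂ) (hw1 : w1 ∈ W) (hw2 : w2 ∈ W)
    (hli : LinearIndependent ℂ ![w1, w2])
    (hc1 : ∃ mu : ℂ, ∃ u : Fin 6 → ℂ, w1 = mu • e5 + u ∧ u 0 = 0 ∧ u 1 = 0 ∧ u 5 = 0 ∧
      u 4 ^ 3 = eval ![u 0, u 1, u 2, u 3] F)
    (hc2 : ∃ mu : ℂ, ∃ u : Fin 6 → ℂ, w2 = mu • e5 + u ∧ u 0 = 0 ∧ u 1 = 0 ∧ u 5 = 0 ∧
      u 4 ^ 3 = eval ![u 0, u 1, u 2, u 3] F) :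
    e5 ∈ W := by
  obtain ⟨m1, u1, he1, hu10, hu11, hu15, -⟩ := hc1
  obtain ⟨m2, u2, he2, hu20, hu21, hu25, -⟩ := hc2
  have hw10 : w1 0 = 0 := by rw [he1]; simp [e5]; exact hu10
  have hw11 : w1 1 = 0 := by rw [he1]; simp [e5, Matrix.vecHead, Matrix.vecTail]; exact hu11
  have hw20 : w2 0 = 0 := by rw [he2]; simp [e5]; exact hu20
  have hw21 : w2 1 = 0 := by rw [he2]; simp [e5, Matrix.vecHead, Matrix.vecTail]; exact hu21
  clear he1 he2 hu10 hu11 hu15 hu20 hu21 hu25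
  set y1 := w1 2 with hy1
  set z1 := w1 3 with hz1
  set p := w1 4 with hp
  set y2 := w2 2 with hy2
  set z2 := w2 3 with hz2
  set q := w2 4 with hq
  -- key identity on all of W
  have key : ∀ a b : ℂ, (a * p + b * q) ^ 3
      = eval ![0, 0, a * y1 + b * y2, a * z1 + b * z2] F := by
    intro a b
    have hv : a • w1 + b • w2 ∈ W := W.add_mem (W.smul_mem a hw1) (W.smul_mem b hw2)
    have h0 : (a • w1 + b • w2) 0 = 0 := by simp [hw10, hw20]
    have h1 : (a • w1 + b • w2) 1 = 0 := by simp [hw11, hw21]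
    have h := hWf _ hv
    rw [eval_fPoly F t _ h0 h1] at h
    have h2 : (a • w1 + b • w2) 2 = a * y1 + b * y2 := by simp [hy1, hy2]
    have h3 : (a • w1 + b • w2) 3 = a * z1 + b * z2 := by simp [hz1, hz2]
    have h4 : (a • w1 + b • w2) 4 = a * p + b * q := by simp [hp, hq]
    rw [h2, h3, h4] at h
    linear_combination h
  have hF0 : eval ![0, 0, (0:ℂ), 0] F = 0 := by
    have h : (![0, 0, (0:ℂ), 0] : Fin 4 → ℂ) = 0 := by
      funext i; fin_cases i <;> rfl
    rw [h, eval_zero, constantCoeff_eq]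
    exact hF.coeff_eq_zero (by simp [Finsupp.degree])
  by_cases hd : y1 * z2 - y2 * z1 = 0
  · -- dependent case
    obtain ⟨a, b, hab, hA, hB⟩ : ∃ a b : ℂ, (a ≠ 0 ∨ b ≠ 0) ∧
        a * y1 + b * y2 = 0 ∧ a * z1 + b * z2 = 0 := by
      by_cases hy : y1 = 0
      · by_cases hz : z1 = 0
        · exact ⟨1, 0, Or.inl one_ne_zero, by simp [hy], by simp [hz]⟩
        · refine ⟨z2, -z1, Or.inr (by simpa using hz), ?_, by ring⟩
          have hy2z : y2 * z1 = 0 := by rw [hy] at hd; linear_combination -hd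
          rcases mul_eq_zero.mp hy2z with h | h
          · rw [hy, h]; ring
          · exact absurd h hz
      · refine ⟨y2, -y1, Or.inr (by simpa using hy), by ring, ?_⟩
        linear_combination -hd
    set v := a • w1 + b • w2 with hv
    have hvW : v ∈ W := W.add_mem (W.smul_mem a hw1) (W.smul_mem b hw2)
    have c0 : v 0 = 0 := by simp [hv, hw10, hw20]
    have c1 : v 1 = 0 := by simp [hv, hw11, hw21]
    have c2 : v 2 = 0 := by
      have : v 2 = a * y1 + b * y2 := by simp [hv, hy1, hy2]
      rw [this, hA]
    have c3 : v 3 = 0 := by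
      have : v 3 = a * z1 + b * z2 := by simp [hv, hz1, hz2]
      rw [this, hB]
    have c4 : v 4 = 0 := by
      have h := key a b
      rw [hA, hB, hF0] at h
      have h4 : v 4 = a * p + b * q := by simp [hv, hp, hq]
      rw [h4]
      exact pow_eq_zero_iff (by norm_num) |>.mp h
    have hveq : v = (v 5) • e5 := by
      funext i
      fin_cases i <;> norm_num [e5, Matrix.vecHead, Matrix.vecTail] <;>
        first | exact c0 | exact c1 | exact c2 | exact c3 | exact c4 | rfl
    have hvne : v ≠ 0 := by
      intro h
      rcases LinearIndependent.pair_iff.mp hli a b (by rw [← hv, h]) with ⟨ha, hb⟩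
      rcases hab with h' | h' <;> [exact h' ha; exact h' hb]
    have hv5 : v 5 ≠ 0 := by
      intro h
      exact hvne (by rw [hveq, h, zero_smul])
    obtain ⟨c, hc⟩ : ∃ c, c = v 5 := ⟨v 5, rfl⟩
    have hcne : c ≠ 0 := by rw [hc]; exact hv5
    have hveq' : v = c • e5 := by rw [hc]; exact hveq
    have he : e5 = c⁻¹ • v := by
      rw [hveq', smul_smul, inv_mul_cancel₀ hcne, one_smul]
    rw [he]
    exact W.smul_mem _ hvW
  · -- independent case: contradiction with hG
    exfalso
    apply hG
    have hdne : (y1 * z2 - y2 * z1) ≠ 0 := hd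
    refine ⟨1, (z2 * p - z1 * q) / (y1 * z2 - y2 * z1),
      (y1 * q - y2 * p) / (y1 * z2 - y2 * z1), fun y z => ?_⟩
    have hkey := key ((z2 * y - y2 * z) / (y1 * z2 - y2 * z1))
      ((y1 * z - z1 * y) / (y1 * z2 - y2 * z1))
    have e2 : (z2 * y - y2 * z) / (y1 * z2 - y2 * z1) * y1
        + (y1 * z - z1 * y) / (y1 * z2 - y2 * z1) * y2 = y := by
      rw [div_mul_eq_mul_div, div_mul_eq_mul_div, ← add_div, div_eq_iff hdne]
      ring
    have e3 : (z2 * y - y2 * z) / (y1 * z2 - y2 * z1) * z1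
        + (y1 * z - z1 * y) / (y1 * z2 - y2 * z1) * z2 = z := by
      rw [div_mul_eq_mul_div, div_mul_eq_mul_div, ← add_div, div_eq_iff hdne]
      ring
    rw [e2, e3] at hkey
    rw [← hkey]
    field_simp
    ring
end

section
/- Let F be a homogeneous polynomial of degree 3 over ℂ in x_0, x_1, x_2, x_3 such that neither of the binary cubics G_1(y,z) := F(0,0,y,z) and G_2(y,z) := F(0,y,0,z) is of the form c·ℓ(y,z)^3 for a scalar c and a linear form ℓ. Let t ∈ ℂ with t ≠ 0 and f := x_4^3 − F(x_0,x_1,x_2,x_3) + x_5·(x_0·x_3 − x_1·x_2) + t·x_0·x_5^2. Then there is no 3-dimensional linear subspace V ⊆ ℂ^6 with e_5 ∈ V on which f vanishes identically. (The cyclic cubic fourfold Y_{F,t} contains no plane through the point p_0.) -/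
open MvPolynomial

lemma eval_fPoly_s13 (F : MvPolynomial (Fin 4) ℂ) (t : ℂ) (w : Fin 6 → ℂ) :
    eval w (fPoly F t) = w 4 ^ 3 - eval (fun i => w (Fin.castLE (by norm_num) i)) F
      + w 5 * (w 0 * w 3 - w 1 * w 2) + t * w 0 * w 5 ^ 2 := by
  simp [fPoly, eval_rename, Function.comp_def]

/-- A vector vanishing in coordinates 0–4 is a multiple of `e₅`. -/
lemma eq_smul_e5 {v : Fin 6 → ℂ} (h0 : v 0 = 0) (h1 : v 1 = 0) (h2 : v 2 = 0)
    (h3 : v 3 = 0) (h4 : v 4 = 0) : v = v 5 • e5 := by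
  funext i
  fin_cases i
  · show v 0 = v 5 * 0; rw [h0]; ring
  · show v 1 = v 5 * 0; rw [h1]; ring
  · show v 2 = v 5 * 0; rw [h2]; ring
  · show v 3 = v 5 * 0; rw [h3]; ring
  · show v 4 = v 5 * 0; rw [h4]; ring
  · show v 5 = v 5 * 1; ring

set_option synthInstance.maxHeartbeats 1000000 in
set_option maxHeartbeats 1000000 in
/-- The key linear-algebra step: if `V` is 3-dimensional, every `v ∈ V` with
`v j = v 3 = 0` is a multiple of `e₅`, and `v₄³ = G (v j) (v 3)` on `V`, then `G`
is the cube of a linear form. -/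
lemma keyLemma (G : ℂ → ℂ → ℂ) (V : Submodule ℂ (Fin 6 → ℂ))
    (h3 : Module.finrank ℂ ↥V = 3) (j : Fin 6)
    (hker : ∀ v ∈ V, v j = 0 → v 3 = 0 → v = v 5 • e5)
    (hcube : ∀ v ∈ V, (v 4) ^ 3 = G (v j) (v 3)) :
    ∃ a b : ℂ, ∀ y z : ℂ, G y z = (a * y + b * z) ^ 3 := by
  let φ : ↥V →ₗ[ℂ] ℂ × ℂ :=
    ((LinearMap.proj j).prod (LinearMap.proj (3 : Fin 6))).comp V.subtype
  have hφ : ∀ x : ↥V, φ x = ((x : Fin 6 → ℂ) j, (x : Fin 6 → ℂ) 3) := fun x => rfl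
  -- the kernel of φ injects into ℂ via the 5th coordinate
  let ψ : ↥(LinearMap.ker φ) →ₗ[ℂ] ℂ :=
    (LinearMap.proj (5 : Fin 6)).comp (V.subtype.comp (LinearMap.ker φ).subtype)
  have hinj : Function.Injective ψ := by
    intro x y hxy
    have hx2 := x.2; rw [LinearMap.mem_ker, hφ] at hx2
    have hy2 := y.2; rw [LinearMap.mem_ker, hφ] at hy2
    have hjx : ((x : ↥V) : Fin 6 → ℂ) j = 0 := congrArg Prod.fst hx2
    have h3x : ((x : ↥V) : Fin 6 → ℂ) 3 = 0 := congrArg Prod.snd hx2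
    have hjy : ((y : ↥V) : Fin 6 → ℂ) j = 0 := congrArg Prod.fst hy2
    have h3y : ((y : ↥V) : Fin 6 → ℂ) 3 = 0 := congrArg Prod.snd hy2
    have hmemsub : ((x : ↥V) : Fin 6 → ℂ) - ((y : ↥V) : Fin 6 → ℂ) ∈ V :=
      V.sub_mem (x : ↥V).2 (y : ↥V).2
    have hmul := hker _ hmemsub
      (by rw [Pi.sub_apply, hjx, hjy, sub_zero])
      (by rw [Pi.sub_apply, h3x, h3y, sub_zero])
    have h5 : (((x : ↥V) : Fin 6 → ℂ) - ((y : ↥V) : Fin 6 → ℂ)) 5 = 0 := by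
      rw [Pi.sub_apply]
      have : ψ x = ((x : ↥V) : Fin 6 → ℂ) 5 := rfl
      have h2 : ψ y = ((y : ↥V) : Fin 6 → ℂ) 5 := rfl
      rw [← this, ← h2, hxy, sub_self]
    rw [h5, zero_smul, sub_eq_zero] at hmul
    exact Subtype.ext (Subtype.ext hmul)
  have hker1 : Module.finrank ℂ ↥(LinearMap.ker φ) ≤ 1 := by
    have := LinearMap.finrank_le_finrank_of_injective hinj
    simpa using this
  have hrn := LinearMap.finrank_range_add_finrank_ker φ
  rw [h3] at hrn
  have hfr2 : Module.finrank ℂ (ℂ × ℂ) = 2 := by simp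
  have hle : Module.finrank ℂ ↥(LinearMap.range φ) ≤ 2 := by
    have := Submodule.finrank_le (LinearMap.range φ)
    omega
  have hrange : Module.finrank ℂ ↥(LinearMap.range φ) = 2 := by omega
  have htop : LinearMap.range φ = ⊤ :=
    Submodule.eq_top_of_finrank_eq (by rw [hrange, hfr2])
  have hsurj : Function.Surjective φ := LinearMap.range_eq_top.mp htop
  obtain ⟨u, hu⟩ := hsurj (1, 0)
  obtain ⟨w, hw⟩ := hsurj (0, 1)
  rw [hφ] at hu hw
  have huj : ((u : Fin 6 → ℂ)) j = 1 := congrArg Prod.fst hu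
  have hu3 : ((u : Fin 6 → ℂ)) 3 = 0 := congrArg Prod.snd hu
  have hwj : ((w : Fin 6 → ℂ)) j = 0 := congrArg Prod.fst hw
  have hw3 : ((w : Fin 6 → ℂ)) 3 = 1 := congrArg Prod.snd hw
  refine ⟨(u : Fin 6 → ℂ) 4, (w : Fin 6 → ℂ) 4, fun y z => ?_⟩
  have hm := hcube _ (y • u + z • w : ↥V).2
  have hco : ∀ i : Fin 6, ((y • u + z • w : ↥V) : Fin 6 → ℂ) i
      = y * (u : Fin 6 → ℂ) i + z * (w : Fin 6 → ℂ) i := by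
    intro i; simp
  rw [hco, hco, hco, huj, hu3, hwj, hw3] at hm
  rw [show y * 1 + z * 0 = y by ring, show y * 0 + z * 1 = z by ring] at hm
  rw [← hm]; ring

/-- If neither of the binary cubics `G₁(y,z) = F(0,0,y,z)` and `G₂(y,z) = F(0,y,0,z)`
is proportional to the cube of a linear form, and `t ≠ 0`, then the cyclic cubic
fourfold `Y_{F,t}` contains no plane through the point `p₀`. -/
theorem stmt13 (F : MvPolynomial (Fin 4) ℂ) (hF : F.IsHomogeneous 3)
    (hG1 : ¬ ∃ c a b : ℂ, ∀ y z : ℂ, eval ![0, 0, y, z] F = c * (a * y + b * z) ^ 3)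
    (hG2 : ¬ ∃ c a b : ℂ, ∀ y z : ℂ, eval ![0, y, 0, z] F = c * (a * y + b * z) ^ 3)
    (t : ℂ) (ht : t ≠ 0) :
    ¬ ∃ V : Submodule ℂ (Fin 6 → ℂ), Module.finrank ℂ ↥V = 3 ∧ e5 ∈ V ∧
      ∀ v ∈ V, eval v (fPoly F t) = 0 := by
  rintro ⟨V, h3, he5, hf⟩
  have hzero : eval ![(0:ℂ), 0, 0, 0] F = 0 := by
    have hv : (![(0:ℂ), 0, 0, 0]) = (0 : Fin 4 → ℂ) := by
      funext i; fin_cases i <;> rfl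
    rw [hv, eval_zero]
    exact hF.coeff_eq_zero (d := 0) (by simp)
  -- the three consequences of f vanishing on the line through v and e5
  have key : ∀ v ∈ V, v 0 = 0 ∧ v 1 * v 2 = 0 ∧ v 4 ^ 3 = eval ![0, v 1, v 2, v 3] F := by
    intro v hv
    have hs : ∀ s : ℂ, v 4 ^ 3 - eval (fun i => v (Fin.castLE (by norm_num) i)) F
        + (v 5 + s) * (v 0 * v 3 - v 1 * v 2) + t * v 0 * (v 5 + s) ^ 2 = 0 := by
      intro s
      have hmem : v + s • e5 ∈ V := V.add_mem hv (V.smul_mem s he5)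
      have h := hf _ hmem
      rw [eval_fPoly_s13] at h
      have harg : (fun i : Fin 4 => (v + s • e5) (Fin.castLE (by norm_num) i))
          = (fun i => v (Fin.castLE (by norm_num) i)) := by
        funext i
        fin_cases i
        · show v 0 + s * 0 = v 0; ring
        · show v 1 + s * 0 = v 1; ring
        · show v 2 + s * 0 = v 2; ring
        · show v 3 + s * 0 = v 3; ring
      rw [harg] at h
      have c0 : (v + s • e5) 0 = v 0 := by show v 0 + s * 0 = v 0; ring
      have c1 : (v + s • e5) 1 = v 1 := by show v 1 + s * 0 = v 1; ring
      have c2 : (v + s • e5) 2 = v 2 := by show v 2 + s * 0 = v 2; ring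
      have c3 : (v + s • e5) 3 = v 3 := by show v 3 + s * 0 = v 3; ring
      have c4 : (v + s • e5) 4 = v 4 := by show v 4 + s * 0 = v 4; ring
      have c5 : (v + s • e5) 5 = v 5 + s := by show v 5 + s * 1 = v 5 + s; ring
      rw [c0, c1, c2, c3, c4, c5] at h
      linear_combination h
    have e1 := hs (-v 5)
    have e2 := hs (1 - v 5)
    have e3 := hs (-1 - v 5)
    have h0 : v 0 = 0 := by
      have h' : t * v 0 = 0 := by linear_combination (e2 + e3) / 2 - e1
      exact (mul_eq_zero.mp h').resolve_left ht
    have h12 : v 1 * v 2 = 0 := by linear_combination (e3 - e2) / 2 + v 3 * h0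
    have hE : (fun i : Fin 4 => v (Fin.castLE (by norm_num) i)) = ![0, v 1, v 2, v 3] := by
      funext i
      fin_cases i
      · exact h0
      · rfl
      · rfl
      · rfl
    refine ⟨h0, h12, ?_⟩
    rw [← hE]
    linear_combination e1 + (v 3 * (v 5 + -v 5) + t * (v 5 + -v 5) ^ 2) * h0
      - (v 5 + -v 5) * h12
  have cube4 : ∀ v ∈ V, v 2 = 0 → v 3 = 0 → v 1 = 0 → v 4 = 0 := by
    intro v hv h2 h3' h1
    have := (key v hv).2.2
    rw [h1, h2, h3', hzero] at this
    exact pow_eq_zero_iff (n := 3) (by norm_num) |>.mp this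
  by_cases hc : ∀ v ∈ V, v 1 = 0
  · -- case: x₁ vanishes on V; contradict hG1 via G₁(y,z) = F(0,0,y,z)
    apply hG1
    obtain ⟨a, b, hab⟩ := keyLemma (fun y z => eval ![0, 0, y, z] F) V h3 2
      (by
        intro v hv h2 h3'
        have h0 := (key v hv).1
        have h1 := hc v hv
        have h4 := cube4 v hv h2 h3' h1
        exact eq_smul_e5 h0 h1 h2 h3' h4)
      (by
        intro v hv
        have := (key v hv).2.2
        rw [hc v hv] at this
        exact this)
    exact ⟨1, a, b, fun y z => by rw [one_mul]; exact hab y z⟩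
  · -- case: some a ∈ V with a₁ ≠ 0; then x₂ vanishes on V, contradict hG2
    push_neg at hc
    obtain ⟨a, ha, ha1⟩ := hc
    have ha2 : a 2 = 0 := by
      have := (key a ha).2.1
      exact (mul_eq_zero.mp this).resolve_left ha1
    have hall2 : ∀ v ∈ V, v 2 = 0 := by
      intro v hv
      have hsum := (key _ (V.add_mem ha hv)).2.1
      have hv12 := (key v hv).2.1
      have h' : a 1 * v 2 = 0 := by
        have e1 : (a + v) 1 = a 1 + v 1 := rfl
        have e2 : (a + v) 2 = a 2 + v 2 := rfl
        rw [e1, e2] at hsum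
        linear_combination hsum - hv12 - (a 1 + v 1) * ha2
      exact (mul_eq_zero.mp h').resolve_left ha1
    apply hG2
    obtain ⟨a', b', hab⟩ := keyLemma (fun y z => eval ![0, y, 0, z] F) V h3 1
      (by
        intro v hv h1 h3'
        have h0 := (key v hv).1
        have h2 := hall2 v hv
        have h4 := cube4 v hv h2 h3' h1
        exact eq_smul_e5 h0 h1 h2 h3' h4)
      (by
        intro v hv
        have := (key v hv).2.2
        rw [hall2 v hv] at this
        exact this)
    exact ⟨1, a', b', fun y z => by rw [one_mul]; exact hab y z⟩
end
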